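/- In a dag, if two nodes α and β (both outside a node set L) are connected by an active trail given L, then they are connected by a simple active trail given L, i.e., an active trail that visits no node more than once. -/

import Mathlib

/-- `vs` is a trail in the digraph `E`: consecutive vertices are joined by an
arc of `E` in one direction or the other. -/
def IsTrail {V : Type*} (E : V → V → Prop) (vs : List V) : Prop :=
  vs.Chain' (fun a b => E a b ∨ E b a)

/-- The node at (interior) position `i` of `vs` is head-to-head: both adjacent
links point into it. -/
def IsHeadToHead {V : Type*} (E : V → V → Prop) (vs : List V) (i : ℕ) : Prop :=
  1 ≤ i ∧ i + 1 < vs.length ∧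
    ∃ a b c, vs[i - 1]? = some a ∧ vs[i]? = some b ∧
      vs[i + 1]? = some c ∧ E a b ∧ E c b

/-- The trail `vs` is active given the node set `L`: every head-to-head node is
in `L` or has a descendant in `L`, and every other node of the trail lies
outside `L`. -/
def IsActive {V : Type*} (E : V → V → Prop) (L : Set V) (vs : List V) : Prop :=
  ∀ i < vs.length, ∀ b : V, vs[i]? = some b →
    (IsHeadToHead E vs i → b ∈ L ∨ ∃ d ∈ L, Relation.ReflTransGen E b d) ∧
    (¬ IsHeadToHead E vs i → b ∉ L)

lemma chain'_get?_of {V : Type*} {R : V → V → Prop} {l : List V} (h : l.Chain' R)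
    {k : ℕ} {a b : V} (ha : l[k]? = some a) (hb : l[k+1]? = some b) : R a b := by
  have hk1 : k + 1 < l.length := by
    by_contra hcon
    rw [List.getElem?_eq_none (by omega)] at hb
    exact absurd hb (by simp)
  have h2 := List.isChain_iff_getElem.mp h k (by omega)
  rw [List.getElem?_eq_getElem (by omega), Option.some_inj] at ha
  rw [List.getElem?_eq_getElem hk1, Option.some_inj] at hb
  rwa [ha, hb] at h2

lemma chain'_of_get? {V : Type*} {R : V → V → Prop} {l : List V}
    (h : ∀ k a b, l[k]? = some a → l[k+1]? = some b → R a b) : l.Chain' R := by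
  apply List.isChain_iff_getElem.mpr
  intro k hk
  exact h k _ _ (List.getElem?_eq_getElem (by omega)) (List.getElem?_eq_getElem (by omega))

lemma get?_exists {V : Type*} {l : List V} {k : ℕ} (h : k < l.length) :
    ∃ a, l[k]? = some a := ⟨l[k], List.getElem?_eq_getElem h⟩

/-- Walking forward from a repeated vertex along the trail: if the edge out of
position `i` points forward, then `v` has a descendant in `L`. -/
lemma walk_forward {V : Type*} (E : V → V → Prop)
    (hacyc : ∀ v : V, ¬ Relation.TransGen E v v) (L : Set V) (vs : List V)
    (htrail : IsTrail E vs) (hactive : IsActive E L vs)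
    (i j : ℕ) (hij : i < j) (hj : j < vs.length) (v : V)
    (hvi : vs[i]? = some v) (hvj : vs[j]? = some v)
    (w0 : V) (hw0 : vs[i+1]? = some w0) (hE0 : E v w0) :
    ∃ d ∈ L, Relation.ReflTransGen E v d := by
  have aux : ∀ k, i + 1 + k ≤ j →
      (∃ d ∈ L, Relation.ReflTransGen E v d) ∨
      ∃ u w, vs[i + k]? = some u ∧ vs[i + 1 + k]? = some w ∧
        Relation.TransGen E v w ∧ E u w := by
    intro k
    induction k with
    | zero =>
      intro _
      exact Or.inr ⟨v, w0, by simpa using hvi, by simpa using hw0,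
        Relation.TransGen.single hE0, hE0⟩
    | succ k ihk =>
      intro hk
      rcases ihk (by omega) with h | ⟨u, w, hu, hw, htg, huw⟩
      · exact Or.inl h
      set p := i + 1 + k with hp
      have hpj : p < j := by omega
      by_cases hh : IsHeadToHead E vs p
      · left
        rcases (hactive p (by omega) w hw).1 hh with hwL | ⟨e, he, hre⟩
        · exact ⟨w, hwL, htg.to_reflTransGen⟩
        · exact ⟨e, he, htg.to_reflTransGen.trans hre⟩
      · obtain ⟨x, hx⟩ := get?_exists (l := vs) (k := p + 1) (by omega)
        have hxw : ¬ E x w := by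
          intro hxw
          exact hh ⟨by omega, by omega, u, w, x,
            by simpa [show p - 1 = i + k by omega] using hu, hw, hx, huw, hxw⟩
        have hwx : E w x :=
          (chain'_get?_of htrail hw hx).resolve_right hxw
        right
        exact ⟨w, x, by simpa [show i + (k+1) = p by omega] using hw,
          by simpa [show i + 1 + (k+1) = p + 1 by omega] using hx, htg.tail hwx, hwx⟩
  rcases aux (j - (i + 1)) (by omega) with h | ⟨u, w, hu, hw, htg, huw⟩
  · exact h
  · rw [show i + 1 + (j - (i+1)) = j by omega, hvj, Option.some_inj] at hw
    exact absurd (hw ▸ htg) (hacyc v)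

lemma exists_simple_active_trail_aux {V : Type*}
    (E : V → V → Prop) (hacyc : ∀ v : V, ¬ Relation.TransGen E v v)
    (L : Set V) (α β : V) :
    ∀ n (vs : List V), vs.length ≤ n → IsTrail E vs →
      vs.head? = some α → vs.getLast? = some β → IsActive E L vs →
      ∃ ws : List V, IsTrail E ws ∧ ws.head? = some α ∧ ws.getLast? = some β ∧
        IsActive E L ws ∧ ws.Nodup := by
  intro n
  induction n with
  | zero =>
    intro vs hlen _ hhead _ _
    have : vs = [] := List.length_eq_zero_iff.mp (by omega)
    rw [this] at hhead
    simp at hhead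
  | succ n ih =>
    intro vs hlen htrail hhead hlast hactive
    by_cases hnd : vs.Nodup
    · exact ⟨vs, htrail, hhead, hlast, hactive, hnd⟩
    rw [List.nodup_iff_getElem?_ne_getElem?] at hnd
    push_neg at hnd
    obtain ⟨i, j, hij, hjn, hget⟩ := hnd
    obtain ⟨v, hv⟩ := get?_exists (l := vs) (k := i) (by omega)
    have hv' : vs[j]? = some v := hget ▸ hv
    set d := j - i with hd
    set ws := vs.take i ++ vs.drop j with hws
    have hlws : ws.length = i + (vs.length - j) := by
      simp only [hws, List.length_append, List.length_take, List.length_drop]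
      omega
    have hget_lt : ∀ k, k < i → ws[k]? = vs[k]? := by
      intro k hk
      rw [hws,
        List.getElem?_append_left (by rw [List.length_take]; omega),
        List.getElem?_take_of_lt hk]
    have hget_ge : ∀ k, i ≤ k → ws[k]? = vs[k + d]? := by
      intro k hk
      rw [hws,
        List.getElem?_append_right (by rw [List.length_take]; omega),
        List.getElem?_drop, List.length_take]
      congr 1
      omega
    have hget_le : ∀ k, k ≤ i → ws[k]? = vs[k]? := by
      intro k hk
      rcases lt_or_eq_of_le hk with hk | hk
      · exact hget_lt k hk
      · subst hk
        rw [hget_ge k le_rfl, show k + d = j by omega, hv', hv]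
    -- trail
    have htrail_ws : IsTrail E ws := by
      apply chain'_of_get?
      intro k a b ha hb
      rcases le_or_gt (k + 1) i with h | h
      · rw [hget_le k (by omega)] at ha
        rw [hget_le (k+1) h] at hb
        exact chain'_get?_of htrail ha hb
      · rw [hget_ge k (by omega)] at ha
        rw [hget_ge (k+1) (by omega), show k + 1 + d = k + d + 1 by omega] at hb
        exact chain'_get?_of htrail ha hb
    -- head
    have hhead_ws : ws.head? = some α := by
      have h0 : ws[0]? = vs[0]? := by
        rcases Nat.eq_zero_or_pos i with h | h
        · rw [hget_ge 0 (by omega), show 0 + d = j by omega, hv', ← h, hv]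
        · exact hget_lt 0 h
      have e1 : ws.head? = ws[0]? := by cases ws <;> simp
      have e2 : vs.head? = vs[0]? := by cases vs <;> simp
      rw [e1, h0, ← e2, hhead]
    -- last
    have hlast_ws : ws.getLast? = some β := by
      have hlen1 : 1 ≤ ws.length := by omega
      rw [List.getLast?_eq_getElem?,
        hget_ge (ws.length - 1) (by omega),
        show ws.length - 1 + d = vs.length - 1 by omega,
        ← List.getLast?_eq_getElem?, hlast]
    -- head-to-head transfer away from position i
    have hhh_lt : ∀ k, k < i → (IsHeadToHead E ws k ↔ IsHeadToHead E vs k) := by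
      intro k hk
      unfold IsHeadToHead
      rw [hget_le (k-1) (by omega), hget_le k (by omega), hget_le (k+1) (by omega)]
      constructor
      · rintro ⟨h1, -, h3⟩; exact ⟨h1, by omega, h3⟩
      · rintro ⟨h1, -, h3⟩; exact ⟨h1, by omega, h3⟩
    have hhh_gt : ∀ k, i < k → k < ws.length →
        (IsHeadToHead E ws k ↔ IsHeadToHead E vs (k + d)) := by
      intro k hk hkl
      unfold IsHeadToHead
      rw [hget_ge (k-1) (by omega), hget_ge k (by omega), hget_ge (k+1) (by omega),
        show k - 1 + d = k + d - 1 by omega, show k + 1 + d = k + d + 1 by omega]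
      constructor
      · rintro ⟨h1, h2, h3⟩; exact ⟨by omega, by omega, h3⟩
      · rintro ⟨h1, h2, h3⟩; exact ⟨by omega, by omega, h3⟩
    -- activity
    have hactive_ws : IsActive E L ws := by
      intro k hk b hb
      rcases lt_trichotomy k i with h | h | h
      · have hb' : vs[k]? = some b := (hget_le k h.le).symm.trans hb
        rw [hhh_lt k h]
        exact hactive k (by omega) b hb'
      · -- k = i : the repeated vertex
        subst h
        have hbv : b = v := by
          rw [hget_le k le_rfl, hv, Option.some_inj] at hb
          exact hb.symm
        subst hbv
        constructor
        · -- head-to-head in ws at i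
          rintro ⟨h1, h2, a, b', c, ha, hb'', hc, hEa, hEc⟩
          have hb'v : b' = b := by
            rw [hb, Option.some_inj] at hb''; exact hb''.symm
          subst hb'v
          have ha' : vs[k - 1]? = some a := (hget_le (k-1) (by omega)).symm.trans ha
          by_cases hx : ∃ x, vs[k + 1]? = some x ∧ E x b'
          · obtain ⟨x, hx1, hx2⟩ := hx
            exact (hactive k (by omega) b' hv).1
              ⟨h1, by omega, a, b', x, ha', hv, hx1, hEa, hx2⟩
          · obtain ⟨x, hx1⟩ := get?_exists (l := vs) (k := k + 1) (by omega)
            have hEx : E b' x :=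
              (chain'_get?_of htrail hv hx1).resolve_right fun hc => hx ⟨x, hx1, hc⟩
            exact Or.inr (walk_forward E hacyc L vs htrail hactive k j hij hjn b'
              hv hv' x hx1 hEx)
        · -- not head-to-head in ws at i
          intro hh
          by_cases h1 : 1 ≤ k
          · by_cases h2 : k + 1 < ws.length
            · obtain ⟨a, ha⟩ := get?_exists (l := vs) (k := k - 1) (by omega)
              obtain ⟨c, hc⟩ := get?_exists (l := vs) (k := j + 1) (by omega)
              by_cases hEa : E a b
              · have hEc : ¬ E c b := by
                  intro hEc
                  exact hh ⟨h1, h2, a, b, c, (hget_le (k-1) (by omega)).trans ha, hb,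
                    (hget_ge (k+1) (by omega)).trans
                      (by rw [show k + 1 + d = j + 1 by omega]; exact hc), hEa, hEc⟩
                refine (hactive j (by omega) b hv').2 ?_
                rintro ⟨-, -, a', b', c', -, hb', hc', -, hE2⟩
                rw [hv', Option.some_inj] at hb'
                rw [hc, Option.some_inj] at hc'
                exact hEc (hb' ▸ hc' ▸ hE2)
              · refine (hactive k (by omega) b hv).2 ?_
                rintro ⟨-, -, a', b', c', ha', hb', -, hE1, -⟩
                rw [hv, Option.some_inj] at hb'
                rw [ha, Option.some_inj] at ha'
                exact hEa (ha' ▸ hb' ▸ hE1)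
            · -- b is the last vertex of ws, so j = vs.length - 1
              refine (hactive j (by omega) b hv').2 ?_
              rintro ⟨-, hj2, -⟩
              omega
          · -- i = 0
            refine (hactive k (by omega) b hv).2 ?_
            rintro ⟨hk1, -, -⟩
            omega
      · -- k > i
        have hb' : vs[k + d]? = some b := (hget_ge k h.le).symm.trans hb
        rw [hhh_gt k h hk]
        exact hactive (k + d) (by omega) b hb'
    exact ih ws (by omega) htrail_ws hhead_ws hlast_ws hactive_ws

/-- If two nodes outside `L` are connected by an active trail given `L` in a
finite dag, then they are connected by a simple (vertex-repetition free) active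
trail given `L`. -/
theorem exists_simple_active_trail {V : Type*} [Fintype V]
    (E : V → V → Prop) (hacyc : ∀ v : V, ¬ Relation.TransGen E v v)
    (L : Set V) (α β : V) (hα : α ∉ L) (hβ : β ∉ L)
    (vs : List V) (htrail : IsTrail E vs)
    (hhead : vs.head? = some α) (hlast : vs.getLast? = some β)
    (hactive : IsActive E L vs) :
    ∃ ws : List V, IsTrail E ws ∧ ws.head? = some α ∧ ws.getLast? = some β ∧
      IsActive E L ws ∧ ws.Nodup := by
  exact exists_simple_active_trail_aux E hacyc L α β vs.length vs le_rfl
    htrail hhead hlast hactive
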